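/- Let f(x,y) = u_1x + v_1y and g(x,y) = u_2x + v_2y be binary linear forms with integer coefficients satisfying u_1 ≥ |v_1| ≥ 1, gcd(u_1,v_1) = 1, u_2 ≥ |v_2| ≥ 1, gcd(u_2,v_2) = 1, u_1 ≥ 2, u_2 ≥ 2, and (u_1, |v_1|) ≠ (u_2, |v_2|). Then there exist sets A and B of integers with |A| = |B| = 3 such that |f(A)| < |g(A)| and |f(B)| > |g(B)|. -/
import Mathlib


/-- The image of a finite set `A` of integers under the binary linear form
`f(x,y) = u x + v y`. -/
def binFormImage (u v : ℤ) (A : Finset ℤ) : Finset ℤ :=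
  (A ×ˢ A).image fun p => u * p.1 + v * p.2

private lemma mem_diffs (p q x x' : ℤ) (hp : 0 < p) (hpq : p < q)
    (hx : x = 0 ∨ x = p ∨ x = q) (hx' : x' = 0 ∨ x' = p ∨ x' = q)
    (hne : x ≠ x') :
    |x - x'| = p ∨ |x - x'| = q - p ∨ |x - x'| = q := by
  rcases le_total x' x with h | h
  · rw [abs_of_nonneg (by omega : (0:ℤ) ≤ x - x')]
    rcases hx with rfl | rfl | rfl <;> rcases hx' with rfl | rfl | rfl <;> omega
  · rw [abs_of_nonpos (by omega : x - x' ≤ (0:ℤ))]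
    rcases hx with rfl | rfl | rfl <;> rcases hx' with rfl | rfl | rfl <;> omega

private lemma pick (a b c d : ℤ) (hb : 1 ≤ b) (hba : b < a) (hd : 1 ≤ d) (hdc : d < c)
    (hab : IsCoprime a b) (hcd : IsCoprime c d) (hne : ¬(a = c ∧ b = d)) :
    ∃ q : ℤ, (q = a ∨ q = a + b) ∧ ∀ D E : ℤ,
      (D = b ∨ D = q - b ∨ D = q) → (E = b ∨ E = q - b ∨ E = q) →
      d * E = c * D → False := by
  have ha2 : 2 ≤ a := by omega
  have hc2 : 2 ≤ c := by omega
  have hratio : ¬ (d * a = c * b) := by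
    intro h
    have h1 : a ∣ c := hab.dvd_of_dvd_mul_right ⟨d, by linarith⟩
    have h2 : c ∣ a := hcd.dvd_of_dvd_mul_right ⟨b, by linarith⟩
    have hac : a = c := Int.dvd_antisymm (by omega) (by omega) h1 h2
    have hbd : b = d := by
      rw [← hac] at h
      have h3 : d * a = b * a := by linear_combination h
      exact (mul_right_cancel₀ (show a ≠ (0:ℤ) by omega) h3).symm
    exact hne ⟨hac, hbd⟩
  have hbone : b ∣ a * a → b = 1 := by
    intro hdvd
    have hu : IsUnit b := (hab.symm.mul_right hab.symm).isUnit_of_dvd hdvd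
    rcases Int.isUnit_iff.mp hu with h | h <;> omega
  by_cases hAB : d * (a + b) = c * b ∨ d * (a + b) = c * a
  · refine ⟨a, Or.inl rfl, ?_⟩
    intro D E hD hE heq
    rcases hD with h1 | h1 | h1 <;> rcases hE with h2 | h2 | h2 <;> rw [h1, h2] at heq
    · -- (b, b)
      have h0 : (c - d) * b = 0 := by linear_combination -heq
      have := mul_pos (show (0:ℤ) < c - d by omega) (show (0:ℤ) < b by omega)
      linarith
    · -- (b, a - b)
      rcases hAB with hA | hB
      · have h0 : 2 * (d * b) = 0 := by linear_combination hA - heq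
        have := mul_pos (show (0:ℤ) < d by omega) (show (0:ℤ) < b by omega)
        linarith
      · have key : d * (a * a - 2 * (a * b) - b * b) = 0 := by
          linear_combination a * heq - b * hB
        have key2 : a * a - 2 * (a * b) - b * b = 0 := by
          rcases mul_eq_zero.mp key with h | h
          · omega
          · exact h
        have hb1 : b = 1 := hbone ⟨2 * a + b, by linear_combination key2⟩
        rw [hb1] at key2
        have ha1 : a ∣ 1 := ⟨a - 2, by linear_combination -key2⟩
        have := Int.le_of_dvd one_pos ha1; omega
    · -- (b, a)
      exact hratio heq
    · -- (a - b, b)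
      rcases hAB with hA | hB
      · have key : d * (a * a - 2 * (b * b)) = 0 := by
          linear_combination (a - b) * hA - b * heq
        have key2 : a * a - 2 * (b * b) = 0 := by
          rcases mul_eq_zero.mp key with h | h
          · omega
          · exact h
        have hb1 : b = 1 := hbone ⟨2 * b, by linear_combination key2⟩
        rw [hb1] at key2
        nlinarith [key2, ha2]
      · have key : d * (a * a - a * b - b * b) = 0 := by
          linear_combination (a - b) * hB - a * heq
        have key2 : a * a - a * b - b * b = 0 := by
          rcases mul_eq_zero.mp key with h | h
          · omega
          · exact h
        have hb1 : b = 1 := hbone ⟨a + b, by linear_combination key2⟩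
        rw [hb1] at key2
        have ha1 : a ∣ 1 := ⟨a - 1, by linear_combination -key2⟩
        have := Int.le_of_dvd one_pos ha1; omega
    · -- (a - b, a - b)
      have h0 : (c - d) * (a - b) = 0 := by linear_combination -heq
      have := mul_pos (show (0:ℤ) < c - d by omega) (show (0:ℤ) < a - b by omega)
      linarith
    · -- (a - b, a)
      rcases hAB with hA | hB
      · have key : d * (a * a - a * b - b * b) = 0 := by
          linear_combination (a - b) * hA - b * heq
        have key2 : a * a - a * b - b * b = 0 := by
          rcases mul_eq_zero.mp key with h | h
          · omega
          · exact h
        have hb1 : b = 1 := hbone ⟨a + b, by linear_combination key2⟩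
        rw [hb1] at key2
        have ha1 : a ∣ 1 := ⟨a - 1, by linear_combination -key2⟩
        have := Int.le_of_dvd one_pos ha1; omega
      · have key : d * (b * b) = 0 := by
          linear_combination a * heq - (a - b) * hB
        have key2 : b * b = 0 := by
          rcases mul_eq_zero.mp key with h | h
          · omega
          · exact h
        have := mul_pos (show (0:ℤ) < b by omega) (show (0:ℤ) < b by omega)
        linarith
    · -- (a, b)
      have hx1 : d * b < c * b := mul_lt_mul_of_pos_right hdc (by omega)
      have hx2 : c * b < c * a := mul_lt_mul_of_pos_left hba (by omega)
      linarith
    · -- (a, a - b)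
      have hx1 : d * (a - b) < c * (a - b) := mul_lt_mul_of_pos_right hdc (by omega)
      have hx2 : c * (a - b) ≤ c * a := mul_le_mul_of_nonneg_left (by omega) (by omega)
      linarith
    · -- (a, a)
      have h0 : (c - d) * a = 0 := by linear_combination -heq
      have := mul_pos (show (0:ℤ) < c - d by omega) (show (0:ℤ) < a by omega)
      linarith
  · rw [not_or] at hAB
    obtain ⟨hA, hB⟩ := hAB
    refine ⟨a + b, Or.inr rfl, ?_⟩
    intro D E hD hE heq
    rcases hD with h1 | h1 | h1 <;> rcases hE with h2 | h2 | h2 <;> rw [h1, h2] at heq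
    · have h0 : (c - d) * b = 0 := by linear_combination -heq
      have := mul_pos (show (0:ℤ) < c - d by omega) (show (0:ℤ) < b by omega)
      linarith
    · exact hratio (by linear_combination heq)
    · exact hA heq
    · have heq' : d * b = c * a := by linear_combination heq
      have hx1 : d * b < c * b := mul_lt_mul_of_pos_right hdc (by omega)
      have hx2 : c * b < c * a := mul_lt_mul_of_pos_left hba (by omega)
      linarith
    · have h0 : (c - d) * a = 0 := by linear_combination -heq
      have := mul_pos (show (0:ℤ) < c - d by omega) (show (0:ℤ) < a by omega)
      linarith
    · exact hB (by linear_combination heq)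
    · have hx1 : d * b < c * b := mul_lt_mul_of_pos_right hdc (by omega)
      have hx2 : c * b < c * (a + b) := mul_lt_mul_of_pos_left (by omega) (by omega)
      linarith
    · have heq' : d * a = c * (a + b) := by linear_combination heq
      have hx1 : d * a < c * a := mul_lt_mul_of_pos_right hdc (by omega)
      have hx2 : c * a < c * (a + b) := mul_lt_mul_of_pos_left (by omega) (by omega)
      linarith
    · have h0 : (c - d) * (a + b) = 0 := by linear_combination -heq
      have := mul_pos (show (0:ℤ) < c - d by omega) (show (0:ℤ) < a + b by omega)
      linarith

private lemma half' (a v₁ b c v₂ d : ℤ)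
    (hb : 1 ≤ b) (hba : b < a) (hd : 1 ≤ d) (hdc : d < c)
    (hv1 : v₁ = b ∨ v₁ = -b) (hv2 : v₂ = d ∨ v₂ = -d)
    (hco1 : IsCoprime a b) (hco2 : IsCoprime c d)
    (hne : ¬(a = c ∧ b = d)) :
    ∃ A : Finset ℤ, A.card = 3 ∧
      (binFormImage a v₁ A).card < (binFormImage c v₂ A).card := by
  obtain ⟨q, hq, hnor⟩ := pick a b c d hb hba hd hdc hco1 hco2 hne
  have hbq : b < q := by rcases hq with rfl | rfl <;> omega
  have h0b : (0:ℤ) < b := by omega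
  have hA3 : ({0, b, q} : Finset ℤ).card = 3 := by
    have h1 : (0:ℤ) ∉ ({b, q} : Finset ℤ) := by simp; omega
    have h2 : b ∉ ({q} : Finset ℤ) := by simp; omega
    rw [Finset.card_insert_of_notMem h1, Finset.card_insert_of_notMem h2,
      Finset.card_singleton]
  refine ⟨{0, b, q}, hA3, ?_⟩
  have hmem : ∀ x : ℤ, x ∈ ({0, b, q} : Finset ℤ) ↔ (x = 0 ∨ x = b ∨ x = q) := by
    intro x; simp
  have hc0 : (0:ℤ) < c := by omega
  have hv2ne : v₂ ≠ 0 := by rcases hv2 with rfl | rfl <;> omega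
  have hdabs : |v₂| = d := by
    rcases hv2 with rfl | rfl
    · exact abs_of_pos (by omega)
    · rw [abs_neg]; exact abs_of_pos (by omega)
  have hco2v : IsCoprime c v₂ := by
    rcases hv2 with rfl | rfl
    · exact hco2
    · exact hco2.neg_right
  have hinj : Set.InjOn (fun p : ℤ × ℤ => c * p.1 + v₂ * p.2)
      ↑(({0, b, q} : Finset ℤ) ×ˢ ({0, b, q} : Finset ℤ)) := by
    rintro ⟨x, y⟩ hxy ⟨x', y'⟩ hxy' h
    simp only [Finset.coe_product, Set.mem_prod, Finset.mem_coe, hmem] at hxy hxy'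
    simp only at h
    have hdvd : c ∣ v₂ * (y' - y) := ⟨x - x', by linarith⟩
    have hdvd2 : c ∣ (y' - y) := hco2v.dvd_of_dvd_mul_left hdvd
    obtain ⟨k, hk⟩ := hdvd2
    have hxk : x - x' = v₂ * k := by
      have h2 : c * (x - x') = c * (v₂ * k) := by linear_combination h + v₂ * hk
      exact mul_left_cancel₀ (by omega) h2
    by_cases hk0 : k = 0
    · subst hk0
      rw [mul_zero] at hxk hk
      rw [Prod.mk.injEq]
      exact ⟨by omega, by omega⟩
    · exfalso
      have hx_ne : x ≠ x' := by
        intro hxe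
        have h0 : v₂ * k = 0 := by rw [← hxk, hxe, sub_self]
        exact hk0 ((mul_eq_zero.mp h0).resolve_left hv2ne)
      have hy_ne : y' ≠ y := by
        intro hye
        have h0 : c * k = 0 := by rw [← hk, hye, sub_self]
        exact hk0 ((mul_eq_zero.mp h0).resolve_left (by omega))
      have hD := mem_diffs b q x x' h0b hbq hxy.1 hxy'.1 hx_ne
      have hE := mem_diffs b q y' y h0b hbq hxy'.2 hxy.2 hy_ne
      apply hnor |x - x'| |y' - y| hD hE
      rw [hxk, hk, abs_mul, abs_mul, hdabs, abs_of_pos hc0]; ring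
  have hg : (binFormImage c v₂ ({0, b, q} : Finset ℤ)).card = 9 := by
    rw [binFormImage, Finset.card_image_of_injOn hinj, Finset.card_product, hA3]
  have hcol : ∃ x1 y1 x2 y2 : ℤ,
      ((x1, y1) ∈ (({0, b, q} : Finset ℤ) ×ˢ ({0, b, q} : Finset ℤ))) ∧
      ((x2, y2) ∈ (({0, b, q} : Finset ℤ) ×ˢ ({0, b, q} : Finset ℤ))) ∧
      ((x1, y1) : ℤ × ℤ) ≠ (x2, y2) ∧
      a * x1 + v₁ * y1 = a * x2 + v₁ * y2 := by
    rcases hv1 with hv | hv <;> rcases hq with hqq | hqq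
    · exact ⟨b, 0, 0, q, by simp [Finset.mem_product], by simp [Finset.mem_product],
        by rw [Ne, Prod.mk.injEq]; intro h; omega, by rw [hv, hqq]; ring⟩
    · exact ⟨b, b, 0, q, by simp [Finset.mem_product], by simp [Finset.mem_product],
        by rw [Ne, Prod.mk.injEq]; intro h; omega, by rw [hv, hqq]; ring⟩
    · exact ⟨b, q, 0, 0, by simp [Finset.mem_product], by simp [Finset.mem_product],
        by rw [Ne, Prod.mk.injEq]; intro h; omega, by rw [hv, hqq]; ring⟩
    · exact ⟨b, q, 0, b, by simp [Finset.mem_product], by simp [Finset.mem_product],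
        by rw [Ne, Prod.mk.injEq]; intro h; omega, by rw [hv, hqq]; ring⟩
  obtain ⟨x1, y1, x2, y2, hP1, hP2, hP12, hPeq⟩ := hcol
  have hsub : binFormImage a v₁ ({0, b, q} : Finset ℤ) ⊆
      (((({0, b, q} : Finset ℤ) ×ˢ ({0, b, q} : Finset ℤ)).erase (x2, y2)).image
        (fun p : ℤ × ℤ => a * p.1 + v₁ * p.2)) := by
    intro z hz
    rw [binFormImage, Finset.mem_image] at hz
    obtain ⟨p, hp, rfl⟩ := hz
    rw [Finset.mem_image]
    by_cases hpp : p = (x2, y2)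
    · exact ⟨(x1, y1), Finset.mem_erase.mpr ⟨hP12, hP1⟩, by rw [hpp]; exact hPeq⟩
    · exact ⟨p, Finset.mem_erase.mpr ⟨hpp, hp⟩, rfl⟩
  have hfle : (binFormImage a v₁ ({0, b, q} : Finset ℤ)).card ≤ 8 := by
    have h1 := Finset.card_le_card hsub
    have h2 := Finset.card_image_le
      (s := ((({0, b, q} : Finset ℤ) ×ˢ ({0, b, q} : Finset ℤ)).erase (x2, y2)))
      (f := fun p : ℤ × ℤ => a * p.1 + v₁ * p.2)
    have h3 : ((({0, b, q} : Finset ℤ) ×ˢ ({0, b, q} : Finset ℤ)).erase (x2, y2)).card = 8 := by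
      rw [Finset.card_erase_of_mem hP2, Finset.card_product, hA3]
    omega
  omega

private lemma half (u₁ v₁ u₂ v₂ : ℤ)
    (h11 : 1 ≤ |v₁|) (h12 : |v₁| ≤ u₁) (h13 : Int.gcd u₁ v₁ = 1)
    (h21 : 1 ≤ |v₂|) (h22 : |v₂| ≤ u₂) (h23 : Int.gcd u₂ v₂ = 1)
    (hu₁ : 2 ≤ u₁) (hu₂ : 2 ≤ u₂)
    (hne : (u₁, |v₁|) ≠ (u₂, |v₂|)) :
    ∃ A : Finset ℤ, A.card = 3 ∧
      (binFormImage u₁ v₁ A).card < (binFormImage u₂ v₂ A).card := by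
  have hco1 : IsCoprime u₁ v₁ := Int.isCoprime_iff_gcd_eq_one.mpr h13
  have hco2 : IsCoprime u₂ v₂ := Int.isCoprime_iff_gcd_eq_one.mpr h23
  have hco1' : IsCoprime u₁ |v₁| := by
    rcases abs_choice v₁ with h | h <;> rw [h]
    · exact hco1
    · exact hco1.neg_right
  have hco2' : IsCoprime u₂ |v₂| := by
    rcases abs_choice v₂ with h | h <;> rw [h]
    · exact hco2
    · exact hco2.neg_right
  have hv1 : v₁ = |v₁| ∨ v₁ = -|v₁| := by
    rcases abs_choice v₁ with h | h
    · exact Or.inl h.symm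
    · exact Or.inr (by rw [h, neg_neg])
  have hv2 : v₂ = |v₂| ∨ v₂ = -|v₂| := by
    rcases abs_choice v₂ with h | h
    · exact Or.inl h.symm
    · exact Or.inr (by rw [h, neg_neg])
  have hba : |v₁| < u₁ := by
    rcases lt_or_eq_of_le h12 with h | h
    · exact h
    · exfalso
      obtain ⟨s, t, hst⟩ := hco1'
      rw [h] at hst
      have hd1 : u₁ ∣ 1 := ⟨s + t, by linear_combination -hst⟩
      have := Int.le_of_dvd one_pos hd1
      omega
  have hdc : |v₂| < u₂ := by
    rcases lt_or_eq_of_le h22 with h | h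
    · exact h
    · exfalso
      obtain ⟨s, t, hst⟩ := hco2'
      rw [h] at hst
      have hd1 : u₂ ∣ 1 := ⟨s + t, by linear_combination -hst⟩
      have := Int.le_of_dvd one_pos hd1
      omega
  have hneAB : ¬(u₁ = u₂ ∧ |v₁| = |v₂|) := by
    rintro ⟨h1, h2⟩
    exact hne (by rw [h1, h2])
  exact half' u₁ v₁ |v₁| u₂ v₂ |v₂| h11 hba h21 hdc hv1 hv2 hco1' hco2' hneAB

theorem stmt_7 (u₁ v₁ u₂ v₂ : ℤ)
    (h11 : 1 ≤ |v₁|) (h12 : |v₁| ≤ u₁) (h13 : Int.gcd u₁ v₁ = 1)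
    (h21 : 1 ≤ |v₂|) (h22 : |v₂| ≤ u₂) (h23 : Int.gcd u₂ v₂ = 1)
    (hu₁ : 2 ≤ u₁) (hu₂ : 2 ≤ u₂)
    (hne : (u₁, |v₁|) ≠ (u₂, |v₂|)) :
    ∃ A B : Finset ℤ, A.card = 3 ∧ B.card = 3 ∧
      (binFormImage u₁ v₁ A).card < (binFormImage u₂ v₂ A).card ∧
      (binFormImage u₁ v₁ B).card > (binFormImage u₂ v₂ B).card := by
  obtain ⟨A, hA, hAlt⟩ := half u₁ v₁ u₂ v₂ h11 h12 h13 h21 h22 h23 hu₁ hu₂ hne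
  obtain ⟨B, hB, hBlt⟩ := half u₂ v₂ u₁ v₁ h21 h22 h23 h11 h12 h13 hu₂ hu₁ hne.symm
  exact ⟨A, B, hA, hB, hAlt, hBlt⟩
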